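/- Let $(\mathbf{x},\mathbf{u})$ be an admissible process for the bilinear state equation, and let the differentiable symmetric matrix function $\mathbf{P}:\mathbb{R}\to\mathbb{R}^{n\times n}$ and differentiable $\mathbf{p}:\mathbb{R}\to\mathbb{R}^n$ satisfy $\dot{\mathbf{P}}(t)=-\mathbf{P}(t)(\mathbf{A}(t)+\{\mathbf{u}\mathbf{N}(t)\})-(\mathbf{A}(t)+\{\mathbf{u}\mathbf{N}(t)\})^T\mathbf{P}(t)-\mathbf{Q}(t)$ and $\dot{\mathbf{p}}(t)=-(\mathbf{A}(t)+\{\mathbf{u}\mathbf{N}(t)\})^T\mathbf{p}(t)-\mathbf{P}(t)(\mathbf{B}(t)\mathbf{u}(t)+\mathbf{g}(t))$ on $(0,t_f)$. Set $q(t,\xi)=\tfrac12\xi^T\mathbf{P}(t)\xi+\mathbf{p}(t)^T\xi$ and $s(t,\xi,\nu)=\tfrac12\xi^T\mathbf{Q}(t)\xi+\tfrac12\nu^T\mathbf{R}(t)\nu+q_t(t,\xi)+q_{\mathbf{x}}(t,\xi)\cdot(\mathbf{A}(t)\xi+\mathbf{B}(t)\nu+\{\nu\mathbf{N}(t)\}\xi+\mathbf{g}(t))$.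 Then for every $t\in(0,t_f)$ and every $\xi\in\mathbb{R}^n$, $s(t,\xi,\mathbf{u}(t))=\mathbf{p}(t)^T(\mathbf{B}(t)\mathbf{u}(t)+\mathbf{g}(t))+\tfrac12\mathbf{u}(t)^T\mathbf{R}(t)\mathbf{u}(t)$; in particular $s(t,\xi,\mathbf{u}(t))=s(t,\mathbf{x}(t),\mathbf{u}(t))$ for all $\xi\in\mathbb{R}^n$, so $s(t,\cdot,\mathbf{u}(t))$ attains its maximum at $\mathbf{x}(t)$. -/

import Mathlib

open MeasureTheory Set Matrix

/-- `{νN(t)} = ∑ᵢ νᵢ Nᵢ(t)`. -/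
noncomputable def uN {n nu : ℕ} (N : Fin nu → ℝ → Matrix (Fin n) (Fin n) ℝ)
    (ν : Fin nu → ℝ) (t : ℝ) : Matrix (Fin n) (Fin n) ℝ :=
  ∑ i, ν i • N i t

/-- The quadratic improving function `q(t,ξ) = ½ ξᵀP(t)ξ + p(t)ᵀξ`. -/
noncomputable def qQuad {n : ℕ} (P : ℝ → Matrix (Fin n) (Fin n) ℝ)
    (p : ℝ → Fin n → ℝ) (t : ℝ) (ξ : Fin n → ℝ) : ℝ :=
  (1 / 2) * (ξ ⬝ᵥ (P t *ᵥ ξ)) + p t ⬝ᵥ ξ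

/-- The bilinear vector field `f(t,ξ,ν) = A(t)ξ + B(t)ν + {νN(t)}ξ + g(t)`. -/
noncomputable def fBil {n nu : ℕ}
    (A : ℝ → Matrix (Fin n) (Fin n) ℝ) (B : ℝ → Matrix (Fin n) (Fin nu) ℝ)
    (N : Fin nu → ℝ → Matrix (Fin n) (Fin n) ℝ) (g : ℝ → Fin n → ℝ)
    (t : ℝ) (ξ : Fin n → ℝ) (ν : Fin nu → ℝ) : Fin n → ℝ :=
  A t *ᵥ ξ + B t *ᵥ ν + uN N ν t *ᵥ ξ + g t

/-- Krotov's `s` function for the CBQR problem: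
`s(t,ξ,ν) = ½ξᵀQ(t)ξ + ½νᵀR(t)ν + q_t(t,ξ) + q_x(t,ξ)·(A(t)ξ + B(t)ν + {νN(t)}ξ + g(t))`. -/
noncomputable def sCBQR {n nu : ℕ}
    (A : ℝ → Matrix (Fin n) (Fin n) ℝ) (B : ℝ → Matrix (Fin n) (Fin nu) ℝ)
    (N : Fin nu → ℝ → Matrix (Fin n) (Fin n) ℝ) (g : ℝ → Fin n → ℝ)
    (Q : ℝ → Matrix (Fin n) (Fin n) ℝ) (R : ℝ → Matrix (Fin nu) (Fin nu) ℝ)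
    (P : ℝ → Matrix (Fin n) (Fin n) ℝ) (p : ℝ → Fin n → ℝ)
    (t : ℝ) (ξ : Fin n → ℝ) (ν : Fin nu → ℝ) : ℝ :=
  (1 / 2) * (ξ ⬝ᵥ (Q t *ᵥ ξ)) + (1 / 2) * (ν ⬝ᵥ (R t *ᵥ ν)) +
    deriv (fun τ => qQuad P p τ ξ) t +
    fderiv ℝ (qQuad P p t) ξ (fBil A B N g t ξ ν)

/-! auxiliary lemmas -/

section CBQRAux

open Matrix

variable {n : ℕ}

private lemma cbqr_hasFDerivAt_dot (w ξ : Fin n → ℝ) :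
    HasFDerivAt (fun v : Fin n → ℝ => w ⬝ᵥ v)
      (∑ i, w i • ContinuousLinearMap.proj (R := ℝ) (φ := fun _ : Fin n => ℝ) i) ξ := by
  simp only [dotProduct]
  exact HasFDerivAt.fun_sum fun i _ =>
    ((ContinuousLinearMap.proj (R := ℝ) (φ := fun _ : Fin n => ℝ) i).hasFDerivAt.const_mul (w i))

private lemma cbqr_hasFDerivAt_quad (M : Matrix (Fin n) (Fin n) ℝ) (p ξ : Fin n → ℝ) :
    HasFDerivAt (fun v : Fin n → ℝ => (1 / 2) * (v ⬝ᵥ (M *ᵥ v)) + p ⬝ᵥ v)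
      ((1/2 : ℝ) • (∑ i, (ξ i • (∑ j, M i j • ContinuousLinearMap.proj (R := ℝ) (φ := fun _ : Fin n => ℝ) j)
          + (M i ⬝ᵥ ξ) • ContinuousLinearMap.proj (R := ℝ) (φ := fun _ : Fin n => ℝ) i))
        + ∑ i, p i • ContinuousLinearMap.proj (R := ℝ) (φ := fun _ : Fin n => ℝ) i) ξ := by
  have h1 : HasFDerivAt (fun v : Fin n → ℝ => v ⬝ᵥ (M *ᵥ v))
      (∑ i, (ξ i • (∑ j, M i j • ContinuousLinearMap.proj (R := ℝ) (φ := fun _ : Fin n => ℝ) j)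
          + (M i ⬝ᵥ ξ) • ContinuousLinearMap.proj (R := ℝ) (φ := fun _ : Fin n => ℝ) i)) ξ := by
    simp only [dotProduct, mulVec]
    exact HasFDerivAt.fun_sum fun i _ =>
      ((ContinuousLinearMap.proj (R := ℝ) (φ := fun _ : Fin n => ℝ) i).hasFDerivAt.mul
        (cbqr_hasFDerivAt_dot (M i) ξ))
  have h2 := cbqr_hasFDerivAt_dot p ξ
  simpa [smul_smul] using (h1.fun_const_smul (1/2 : ℝ)).fun_add h2

private lemma cbqr_symm_dot {M : Matrix (Fin n) (Fin n) ℝ} (hs : M.IsSymm) (x y : Fin n → ℝ) :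
    (M *ᵥ x) ⬝ᵥ y = x ⬝ᵥ (M *ᵥ y) := by
  have h1 : M *ᵥ x = x ᵥ* M := by conv_lhs => rw [← hs.eq, Matrix.mulVec_transpose]
  rw [h1, dotProduct_mulVec]

private lemma cbqr_dot_transpose (M : Matrix (Fin n) (Fin n) ℝ) (x y : Fin n → ℝ) :
    x ⬝ᵥ (Mᵀ *ᵥ y) = (M *ᵥ x) ⬝ᵥ y := by
  rw [dotProduct_mulVec, Matrix.vecMul_transpose]

private lemma cbqr_fderiv_qQuad_apply (P : ℝ → Matrix (Fin n) (Fin n) ℝ) (p : ℝ → Fin n → ℝ)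
    (t : ℝ) (hs : (P t).IsSymm) (ξ v : Fin n → ℝ) :
    fderiv ℝ (qQuad P p t) ξ v = ξ ⬝ᵥ (P t *ᵥ v) + p t ⬝ᵥ v := by
  have h := cbqr_hasFDerivAt_quad (P t) (p t) ξ
  rw [show qQuad P p t = fun v : Fin n → ℝ => (1 / 2) * (v ⬝ᵥ (P t *ᵥ v)) + p t ⬝ᵥ v from rfl,
    h.fderiv]
  have hsym : (P t *ᵥ ξ) ⬝ᵥ v = ξ ⬝ᵥ (P t *ᵥ v) := cbqr_symm_dot hs ξ v
  simp only [ContinuousLinearMap.add_apply, ContinuousLinearMap.coe_smul', Pi.smul_apply,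
    ContinuousLinearMap.sum_apply, ContinuousLinearMap.smul_apply,
    ContinuousLinearMap.proj_apply, smul_eq_mul]
  simp only [dotProduct, mulVec, Finset.mul_sum, Finset.sum_add_distrib, mul_add] at hsym ⊢
  simp only [← Finset.mul_sum]
  rw [hsym]
  have e : (∑ x, ∑ y, ξ x * (P t x y * v y)) = ∑ x, ξ x * ∑ y, P t x y * v y :=
    Finset.sum_congr rfl fun x _ => (Finset.mul_sum _ _ _).symm
  rw [e]; ring

private lemma cbqr_hasDerivAt_qQuad_time (P : ℝ → Matrix (Fin n) (Fin n) ℝ) (p : ℝ → Fin n → ℝ)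
    (P' : Matrix (Fin n) (Fin n) ℝ) (p' : Fin n → ℝ) (ξ : Fin n → ℝ) (t : ℝ)
    (hP : ∀ i j, HasDerivAt (fun τ => P τ i j) (P' i j) t)
    (hp : ∀ i, HasDerivAt (fun τ => p τ i) (p' i) t) :
    HasDerivAt (fun τ => qQuad P p τ ξ) ((1 / 2) * (ξ ⬝ᵥ (P' *ᵥ ξ)) + p' ⬝ᵥ ξ) t := by
  unfold qQuad
  simp only [dotProduct, mulVec]
  exact (((HasDerivAt.fun_sum fun i _ => ((HasDerivAt.fun_sum fun j _ =>
      (hP i j).mul_const (ξ j)).const_mul (ξ i)))).const_mul (1/2)).add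
    (HasDerivAt.fun_sum fun i _ => (hp i).mul_const (ξ i))

end CBQRAux

/-- Lemma 2 of the paper: if `P` and `p` satisfy the Lyapunov-type differential
equations along the process `(x,u)`, then `s(t,·,u(t))` is constant in the state
variable, equal to `p(t)ᵀ(B(t)u(t)+g(t)) + ½u(t)ᵀR(t)u(t)`; in particular it
attains its maximum at `x(t)`. -/
theorem cbqr_s_state_independent {n nu : ℕ} (tf : ℝ) (htf : 0 < tf)
    (A : ℝ → Matrix (Fin n) (Fin n) ℝ) (B : ℝ → Matrix (Fin n) (Fin nu) ℝ)
    (N : Fin nu → ℝ → Matrix (Fin n) (Fin n) ℝ) (g : ℝ → Fin n → ℝ)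
    (Q : ℝ → Matrix (Fin n) (Fin n) ℝ) (R : ℝ → Matrix (Fin nu) (Fin nu) ℝ)
    (hQ : ∀ t, (Q t).PosSemidef) (hR : ∀ t, (R t).PosSemidef)
    (x : ℝ → Fin n → ℝ) (u : ℝ → Fin nu → ℝ)
    -- `(x,u)` is an admissible process of the bilinear state equation
    (hxode : ∀ t ∈ Ioo 0 tf, HasDerivAt x (fBil A B N g t (x t) (u t)) t)
    (P : ℝ → Matrix (Fin n) (Fin n) ℝ) (p : ℝ → Fin n → ℝ)
    (hPsymm : ∀ t, (P t).IsSymm)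
    -- `Ṗ(t) = -P(t)(A(t)+{uN(t)}) - (A(t)+{uN(t)})ᵀP(t) - Q(t)` on `(0,t_f)`
    (hP : ∀ t ∈ Ioo 0 tf, ∀ i j, HasDerivAt (fun τ => P τ i j)
        ((-(P t * (A t + uN N (u t) t)) - (A t + uN N (u t) t)ᵀ * P t - Q t) i j) t)
    -- `ṗ(t) = -(A(t)+{uN(t)})ᵀp(t) - P(t)(B(t)u(t)+g(t))` on `(0,t_f)`
    (hp : ∀ t ∈ Ioo 0 tf, ∀ i, HasDerivAt (fun τ => p τ i)
        ((-((A t + uN N (u t) t)ᵀ *ᵥ p t) - P t *ᵥ (B t *ᵥ u t + g t)) i) t) :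
    ∀ t ∈ Ioo 0 tf, ∀ ξ : Fin n → ℝ,
      sCBQR A B N g Q R P p t ξ (u t) =
          p t ⬝ᵥ (B t *ᵥ u t + g t) + (1 / 2) * (u t ⬝ᵥ (R t *ᵥ u t)) ∧
      sCBQR A B N g Q R P p t ξ (u t) = sCBQR A B N g Q R P p t (x t) (u t) := by
  intro t ht ξ
  have key : ∀ ζ : Fin n → ℝ, sCBQR A B N g Q R P p t ζ (u t) =
      p t ⬝ᵥ (B t *ᵥ u t + g t) + (1 / 2) * (u t ⬝ᵥ (R t *ᵥ u t)) := by
    intro ζ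
    set M : Matrix (Fin n) (Fin n) ℝ := A t + uN N (u t) t with hM
    set w : Fin n → ℝ := B t *ᵥ u t + g t with hw
    have hqt : deriv (fun τ => qQuad P p τ ζ) t =
        (1 / 2) * (ζ ⬝ᵥ ((-(P t * M) - Mᵀ * P t - Q t) *ᵥ ζ)) +
          (-(Mᵀ *ᵥ p t) - P t *ᵥ w) ⬝ᵥ ζ :=
      (cbqr_hasDerivAt_qQuad_time P p _ _ ζ t (hP t ht) (hp t ht)).deriv
    have hfd : fderiv ℝ (qQuad P p t) ζ (fBil A B N g t ζ (u t)) =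
        ζ ⬝ᵥ (P t *ᵥ (fBil A B N g t ζ (u t))) + p t ⬝ᵥ (fBil A B N g t ζ (u t)) :=
      cbqr_fderiv_qQuad_apply P p t (hPsymm t) ζ _
    have hf : fBil A B N g t ζ (u t) = M *ᵥ ζ + w := by
      unfold fBil
      rw [hM, Matrix.add_mulVec, hw]
      abel
    have e1 : ζ ⬝ᵥ ((-(P t * M) - Mᵀ * P t - Q t) *ᵥ ζ) =
        -(ζ ⬝ᵥ (P t *ᵥ (M *ᵥ ζ))) - ζ ⬝ᵥ (P t *ᵥ (M *ᵥ ζ)) - ζ ⬝ᵥ (Q t *ᵥ ζ) := by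
      rw [Matrix.sub_mulVec, Matrix.sub_mulVec, Matrix.neg_mulVec, dotProduct_sub,
        dotProduct_sub, dotProduct_neg, ← Matrix.mulVec_mulVec, ← Matrix.mulVec_mulVec,
        cbqr_dot_transpose, dotProduct_comm (M *ᵥ ζ) (P t *ᵥ ζ), cbqr_symm_dot (hPsymm t) ζ (M *ᵥ ζ)]
    have e2 : (-(Mᵀ *ᵥ p t) - P t *ᵥ w) ⬝ᵥ ζ =
        -(p t ⬝ᵥ (M *ᵥ ζ)) - ζ ⬝ᵥ (P t *ᵥ w) := by
      rw [sub_dotProduct, neg_dotProduct, dotProduct_comm (P t *ᵥ w) ζ,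
        dotProduct_comm (Mᵀ *ᵥ p t) ζ, cbqr_dot_transpose, dotProduct_comm]
    have e3 : ζ ⬝ᵥ (P t *ᵥ (M *ᵥ ζ + w)) =
        ζ ⬝ᵥ (P t *ᵥ (M *ᵥ ζ)) + ζ ⬝ᵥ (P t *ᵥ w) := by
      rw [Matrix.mulVec_add, dotProduct_add]
    have e4 : p t ⬝ᵥ (M *ᵥ ζ + w) = p t ⬝ᵥ (M *ᵥ ζ) + p t ⬝ᵥ w := by
      rw [dotProduct_add]
    unfold sCBQR
    rw [hqt, hfd, hf, e1, e2, e3, e4]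
    ring
  refine ⟨key ξ, ?_⟩
  rw [key ξ, key (x t)]
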